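/- Let n ≥ 2 and fix an indeterminate q. Then for all integers j ≥ 0, all b ∈ B and all μ = (μ_1,…,μ_n) ∈ ℤ^n, the unrestricted one-dimensional sum of the level-1 perfect crystal of type D_{n+1}^{(2)} satisfies g_j(b,μ) = Σ_γ q^{Σ_{i∈B, i≠0, i≠φ} γ_i(γ_i−1) + Σ_{i∈B} H(b,i)·γ_i} · [j; γ]_{q²}, where the sum is over all γ = (γ_i)_{i∈B} ∈ ℤ_{≥0}^{2n+2} with γ_k − γ_{k̄} = μ_k for 1 ≤ k ≤ n and Σ_{i∈B} γ_i = j, and [j; γ]_{q²} := (q²)_j / Π_{i∈B} (q²)_{γ_i} is the Gaussian multinomial in the variable q², with (q²)_m := Π_{i=1}^m (1 − q^{2i}). -/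

import Mathlib

open Finset

noncomputable section

/-- The indeterminate `q`, living in the field of rational functions `ℚ(q)`. -/
def q : RatFunc ℚ := RatFunc.X

/-! The level-1 perfect crystal of type `D_{n+1}^{(2)}` is
`B = {1,…,n,0,n̄,…,1̄,φ}` (with `2n+2` elements), where `B∖{φ}` is totally ordered by
`1 ≺ ⋯ ≺ n ≺ 0 ≺ n̄ ≺ ⋯ ≺ 1̄`. We encode it as `Fin (2n+2)`: position `p < n` is the
letter `p+1`, position `n` is the letter `0`, position `n+r` (`1 ≤ r ≤ n`) is the barred
letter `\overline{n+1-r}`, and position `2n+1` is `φ`. -/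

/-- The energy function: `H(b,b') = 0` if `b,b' ≠ φ` with `b ≺ b'`, or if
`(b,b') = (0,0)` or `(φ,φ)`; `H(b,b') = 1` if exactly one of `b,b'` is `φ`; and
`H(b,b') = 2` if `b,b' ≠ φ`, `b ⪰ b'` and `(b,b') ≠ (0,0)`. -/
def H (n : ℕ) (b b' : Fin (2 * n + 2)) : ℤ :=
  if (b : ℕ) = 2 * n + 1 ∧ (b' : ℕ) = 2 * n + 1 then 0
  else if (b : ℕ) = 2 * n + 1 ∨ (b' : ℕ) = 2 * n + 1 then 1
  else if (b : ℕ) = n ∧ (b' : ℕ) = n then 0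
  else if (b : ℕ) < (b' : ℕ) then 0 else 2

/-- Contents: the letter `k` (`1 ≤ k ≤ n`) has content `e_k`, the letter `k̄` has content
`-e_k`, and the letters `0` and `φ` have content `0`; here `ℤ^n` is indexed by `Fin n`,
with index `k-1` corresponding to `μ_k`. -/
def cont (n : ℕ) (b : Fin (2 * n + 2)) (k : Fin n) : ℤ :=
  if (b : ℕ) = (k : ℕ) then 1 else if (b : ℕ) = 2 * n - (k : ℕ) then -1 else 0

/-- The unrestricted one-dimensional sum `g_j(b,μ)`: the sum of
`q^{Σ_{i=1}^j i·H(b_{i+1},b_i)}` over all sequences `(b_1,…,b_j) ∈ B^j` of total content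
`μ`, with `b_{j+1} = b`. -/
def g (n j : ℕ) (b : Fin (2 * n + 2)) (μ : Fin n → ℤ) : RatFunc ℚ :=
  ∑ p ∈ Finset.univ.filter (fun p : Fin (j + 1) → Fin (2 * n + 2) =>
      p (Fin.last j) = b ∧
      ∀ k, (∑ i : Fin j, cont n (p i.castSucc) k) = μ k),
    q ^ (∑ i : Fin j, ((i : ℤ) + 1) * H n (p i.succ) (p i.castSucc))

/-- `(q²)_m = Π_{i=1}^m (1 - q^{2i})`. -/
def qfac2 (m : ℕ) : RatFunc ℚ := ∏ i ∈ Finset.range m, (1 - q ^ (2 * (i + 1)))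

lemma q_ne_zero : q ≠ 0 := RatFunc.X_ne_zero

lemma sum_ite_lt {M K : ℕ} (f : ℕ → ℤ) (h : K ≤ M) :
    ∑ i ∈ range M, (if i < K then f i else 0) = ∑ i ∈ range K, f i := by
  rw [← Finset.sum_filter]
  congr 1
  ext i
  simp only [mem_filter, mem_range]
  omega

lemma tel (F : ℕ → RatFunc ℚ) {a b : ℕ} (h : a ≤ b) :
    ∑ i ∈ Ico a b, (F i - F (i + 1)) = F a - F b := by
  induction b, h using Nat.le_induction with
  | base => simp
  | succ b hb ih => rw [Finset.sum_Ico_succ_top (by omega), ih]; ring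

def Hnat (n x y : ℕ) : ℤ :=
  if x = 2 * n + 1 ∧ y = 2 * n + 1 then 0
  else if x = 2 * n + 1 ∨ y = 2 * n + 1 then 1
  else if x = n ∧ y = n then 0
  else if x < y then 0 else 2

lemma H_eq (n : ℕ) (b b' : Fin (2 * n + 2)) : H n b b' = Hnat n ↑b ↑b' := rfl

lemma Hnat_eval {n x p : ℕ} (hx : x < 2 * n + 1) (hp : p < 2 * n + 1) :
    Hnat n x p = if p < (if x = n then n else x + 1) then 2 else 0 := by
  unfold Hnat; split_ifs <;> omega

section core

variable (n : ℕ) (γ : Fin (2 * n + 2) → ℕ)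

def aZ (p : ℕ) : ℤ := if h : p < 2 * n + 2 then (γ ⟨p, h⟩ : ℤ) else 0

def SZ (p : ℕ) : ℤ := ∑ i ∈ range p, aZ n γ i

lemma aZ_eq (i : Fin (2 * n + 2)) : aZ n γ ↑i = (γ i : ℤ) := by
  simp [aZ, i.isLt]

lemma E_to_range (c : Fin (2 * n + 2)) :
    ∑ i, H n c i * (γ i : ℤ) = ∑ p ∈ range (2 * n + 2), Hnat n ↑c p * aZ n γ p := by
  rw [← Fin.sum_univ_eq_sum_range]
  exact Finset.sum_congr rfl fun i _ => by rw [aZ_eq, H_eq]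

lemma SZ_last : SZ n γ (2 * n + 1) = (∑ i, (γ i : ℤ)) - aZ n γ (2 * n + 1) := by
  have h : ∑ i, (γ i : ℤ) = ∑ p ∈ range (2 * n + 2), aZ n γ p := by
    rw [← Fin.sum_univ_eq_sum_range]
    exact Finset.sum_congr rfl fun i _ => (aZ_eq n γ i).symm
  rw [h, Finset.sum_range_succ, SZ]
  ring

lemma E_phi (c : Fin (2 * n + 2)) (hc : (c : ℕ) = 2 * n + 1) :
    ∑ i, H n c i * (γ i : ℤ) = SZ n γ (2 * n + 1) := by
  rw [E_to_range, Finset.sum_range_succ]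
  have h0 : Hnat n ↑c (2 * n + 1) = 0 := by simp [Hnat, hc]
  rw [h0, zero_mul, add_zero, SZ]
  refine Finset.sum_congr rfl fun p hp => ?_
  rw [mem_range] at hp
  have h1 : Hnat n ↑c p = 1 := by unfold Hnat; split_ifs <;> omega
  rw [h1, one_mul]

lemma E_nonphi (c : Fin (2 * n + 2)) (hc : (c : ℕ) < 2 * n + 1) :
    ∑ i, H n c i * (γ i : ℤ) =
      aZ n γ (2 * n + 1) + 2 * SZ n γ (if (c : ℕ) = n then n else (c : ℕ) + 1) := by
  rw [E_to_range, Finset.sum_range_succ]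
  have h1 : Hnat n ↑c (2 * n + 1) = 1 := by unfold Hnat; split_ifs <;> omega
  rw [h1, one_mul]
  have h2 : ∀ p ∈ range (2 * n + 1), Hnat n ↑c p * aZ n γ p
      = if p < (if (c : ℕ) = n then n else (c : ℕ) + 1) then 2 * aZ n γ p else 0 := by
    intro p hp
    rw [mem_range] at hp
    rw [Hnat_eval hc hp]
    split_ifs <;> ring
  rw [Finset.sum_congr rfl h2, sum_ite_lt _ (by split_ifs <;> omega)]
  rw [SZ, Finset.mul_sum]
  ring

lemma key_step (cc e A B : ℤ) (h : B = A + cc) :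
    (1 - q ^ (2 * cc)) * q ^ (e + 2 * A) = q ^ e * (q ^ (2 * A) - q ^ (2 * B)) := by
  subst h
  rw [show 2 * (A + cc) = 2 * A + 2 * cc by ring]
  simp only [zpow_add₀ q_ne_zero]
  ring

lemma core (b : Fin (2 * n + 2)) (J : ℤ) (hJ : J = ∑ i, (γ i : ℤ)) :
    (1 - q ^ (2 * J)) * q ^ (∑ i, H n b i * (γ i : ℤ)) =
    ∑ c, (1 - q ^ (2 * (γ c : ℤ))) *
      q ^ (J * H n b c - H n c c * (γ c : ℤ) + ∑ i, H n c i * (γ i : ℤ)) := by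
  have hm : (γ (Fin.last (2 * n + 1)) : ℤ) = aZ n γ (2 * n + 1) := by
    rw [aZ, dif_pos (show 2 * n + 1 < 2 * n + 2 by omega)]
    rfl
  set m := aZ n γ (2 * n + 1) with hmdef
  have hS0 : SZ n γ 0 = 0 := by simp [SZ]
  have hSlast : SZ n γ (2 * n + 1) = J - m := by rw [SZ_last, hJ]
  have hSstep : ∀ p, SZ n γ (p + 1) = SZ n γ p + aZ n γ p := fun p =>
    Finset.sum_range_succ _ _
  conv_rhs => rw [Fin.sum_univ_castSucc]
  -- the last (φ) term
  have hlast_coe : ((Fin.last (2 * n + 1) : Fin (2 * n + 2)) : ℕ) = 2 * n + 1 := rfl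
  have hHcc_last : H n (Fin.last (2 * n + 1)) (Fin.last (2 * n + 1)) = 0 := by
    rw [H_eq]; simp [Hnat, hlast_coe]
  have hE_last : ∑ i, H n (Fin.last (2 * n + 1)) i * (γ i : ℤ) = J - m := by
    rw [E_phi n γ _ hlast_coe, hSlast]
  -- the castSucc terms
  have hterm : ∀ d : Fin (2 * n + 1),
      (1 - q ^ (2 * (γ d.castSucc : ℤ))) *
        q ^ (J * H n b d.castSucc - H n d.castSucc d.castSucc * (γ d.castSucc : ℤ) +
          ∑ i, H n d.castSucc i * (γ i : ℤ))
      = q ^ (J * Hnat n ↑b ↑d + m) * (q ^ (2 * SZ n γ ↑d) - q ^ (2 * SZ n γ (↑d + 1))) := by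
    intro d
    have hdlt : ((d.castSucc : Fin (2 * n + 2)) : ℕ) < 2 * n + 1 := d.isLt
    have hγd : (γ d.castSucc : ℤ) = aZ n γ ↑d := (aZ_eq n γ d.castSucc).symm
    rw [E_nonphi n γ _ hdlt, H_eq n d.castSucc d.castSucc, H_eq n b d.castSucc]
    have hcoe : ((d.castSucc : Fin (2 * n + 2)) : ℕ) = (d : ℕ) := rfl
    rw [hcoe, hγd]
    by_cases hdn : (d : ℕ) = n
    · rw [show Hnat n ↑d ↑d = 0 by unfold Hnat; split_ifs <;> omega]
      rw [if_pos hdn, hdn]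
      rw [show J * Hnat n ↑b ↑n - 0 * aZ n γ ↑n + (m + 2 * SZ n γ n)
            = J * Hnat n ↑b ↑n + m + 2 * SZ n γ n by ring]
      exact key_step _ _ _ _ (hSstep n)
    · rw [show Hnat n ↑d ↑d = 2 by unfold Hnat; split_ifs <;> omega]
      rw [if_neg hdn]
      rw [show J * Hnat n ↑b ↑d - 2 * aZ n γ ↑d + (m + 2 * SZ n γ (↑d + 1))
            = J * Hnat n ↑b ↑d + m + 2 * SZ n γ ↑d by rw [hSstep]; ring]
      exact key_step _ _ _ _ (hSstep ↑d)
  rw [Finset.sum_congr rfl fun d _ => hterm d]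
  rw [Fin.sum_univ_eq_sum_range
    (fun p => q ^ (J * Hnat n ↑b p + m) * (q ^ (2 * SZ n γ p) - q ^ (2 * SZ n γ (p + 1))))]
  -- rewrite the last term
  rw [hm, hHcc_last, hE_last, H_eq n b (Fin.last (2 * n + 1)), hlast_coe]
  by_cases hb : (b : ℕ) = 2 * n + 1
  · -- b = φ
    have hEb : ∑ i, H n b i * (γ i : ℤ) = J - m := by rw [E_phi n γ b hb, hSlast]
    have hHblast : Hnat n ↑b (2 * n + 1) = 0 := by unfold Hnat; split_ifs <;> omega
    rw [hEb, hHblast]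
    have hcongr : ∀ p ∈ range (2 * n + 1),
        q ^ (J * Hnat n ↑b p + m) * (q ^ (2 * SZ n γ p) - q ^ (2 * SZ n γ (p + 1)))
        = q ^ (J + m) * (q ^ (2 * SZ n γ p) - q ^ (2 * SZ n γ (p + 1))) := by
      intro p hp
      rw [mem_range] at hp
      rw [show Hnat n ↑b p = 1 from by unfold Hnat; split_ifs <;> omega, mul_one]
    rw [Finset.sum_congr rfl hcongr, ← Finset.mul_sum, range_eq_Ico,
      tel (fun p => q ^ (2 * SZ n γ p)) (Nat.zero_le _), hS0, hSlast]
    rw [show J * 0 - 0 * m + (J - m) = J - m by ring]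
    rw [show (2 : ℤ) * 0 = 0 by ring, zpow_zero]
    rw [show (2 : ℤ) * (J - m) = (J + J) - (m + m) by ring,
      show (2 : ℤ) * J = J + J by ring, show (2 : ℤ) * m = m + m by ring,
      show J - m = J - m from rfl]
    have h1 : q ^ J ≠ 0 := zpow_ne_zero _ q_ne_zero
    have h2 : q ^ m ≠ 0 := zpow_ne_zero _ q_ne_zero
    simp only [zpow_add₀ q_ne_zero, zpow_sub₀ q_ne_zero]
    field_simp
    ring
  · -- b ≠ φ
    have hblt : (b : ℕ) < 2 * n + 1 := by have := b.isLt; omega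
    set t' : ℕ := if (b : ℕ) = n then n else (b : ℕ) + 1 with ht'def
    have ht' : t' ≤ 2 * n + 1 := by rw [ht'def]; split_ifs <;> omega
    have hEb : ∑ i, H n b i * (γ i : ℤ) = m + 2 * SZ n γ t' := E_nonphi n γ b hblt
    have hHblast : Hnat n ↑b (2 * n + 1) = 1 := by unfold Hnat; split_ifs <;> omega
    rw [hEb, hHblast]
    rw [range_eq_Ico, ← Finset.sum_Ico_consecutive _ (Nat.zero_le t') ht']
    have hc1 : ∀ p ∈ Ico 0 t',
        q ^ (J * Hnat n ↑b p + m) * (q ^ (2 * SZ n γ p) - q ^ (2 * SZ n γ (p + 1)))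
        = q ^ (J + J + m) * (q ^ (2 * SZ n γ p) - q ^ (2 * SZ n γ (p + 1))) := by
      intro p hp
      rw [mem_Ico] at hp
      have hp2 : p < 2 * n + 1 := by omega
      rw [Hnat_eval hblt hp2, ← ht'def, if_pos hp.2,
        show J * 2 + m = J + J + m by ring]
    have hc2 : ∀ p ∈ Ico t' (2 * n + 1),
        q ^ (J * Hnat n ↑b p + m) * (q ^ (2 * SZ n γ p) - q ^ (2 * SZ n γ (p + 1)))
        = q ^ m * (q ^ (2 * SZ n γ p) - q ^ (2 * SZ n γ (p + 1))) := by
      intro p hp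
      rw [mem_Ico] at hp
      rw [Hnat_eval hblt hp.2, ← ht'def, if_neg (by omega),
        show J * 0 + m = m by ring]
    rw [Finset.sum_congr rfl hc1, Finset.sum_congr rfl hc2, ← Finset.mul_sum,
      ← Finset.mul_sum, tel (fun p => q ^ (2 * SZ n γ p)) (Nat.zero_le _),
      tel (fun p => q ^ (2 * SZ n γ p)) ht', hS0, hSlast]
    rw [show J * 1 - 0 * m + (J - m) = J + J - m by ring]
    rw [show (2 : ℤ) * 0 = 0 by ring, zpow_zero]
    set s := SZ n γ t' with hsdef
    rw [show m + 2 * s = m + s + s by ring,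
      show (2 : ℤ) * s = s + s by ring,
      show (2 : ℤ) * (J - m) = (J + J) - (m + m) by ring,
      show (2 : ℤ) * J = J + J by ring, show (2 : ℤ) * m = m + m by ring]
    have h1 : q ^ J ≠ 0 := zpow_ne_zero _ q_ne_zero
    have h2 : q ^ m ≠ 0 := zpow_ne_zero _ q_ne_zero
    simp only [zpow_add₀ q_ne_zero, zpow_sub₀ q_ne_zero]
    field_simp
    ring


end core

lemma q_pow_ne_one {k : ℕ} (hk : 0 < k) : q ^ k ≠ 1 := by
  have h : (RatFunc.X : RatFunc ℚ) ^ k = algebraMap (Polynomial ℚ) _ (Polynomial.X ^ k) := by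
    simp
  rw [q, h]
  intro h2
  have h1 : (algebraMap (Polynomial ℚ) (RatFunc ℚ)) (Polynomial.X ^ k) =
      algebraMap (Polynomial ℚ) _ 1 := by simpa using h2
  have h3 := RatFunc.algebraMap_injective ℚ h1
  have h4 := congrArg Polynomial.natDegree h3
  simp [Polynomial.natDegree_X_pow] at h4
  omega

lemma qfac2_ne_zero (m : ℕ) : qfac2 m ≠ 0 := by
  rw [qfac2]
  apply Finset.prod_ne_zero_iff.2
  intro i _ h
  have : q ^ (2 * (i + 1)) = 1 := by linear_combination -h
  exact q_pow_ne_one (by omega) this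

lemma qfac2_succ (m : ℕ) : qfac2 (m + 1) = qfac2 m * (1 - q ^ (2 * (m + 1))) :=
  Finset.prod_range_succ _ _

lemma one_sub_q_pow_ne_zero {k : ℕ} (hk : 0 < k) : 1 - q ^ (2 * k) ≠ 0 := by
  intro h
  have : q ^ (2 * k) = 1 := by linear_combination -h
  exact q_pow_ne_one (by omega) this

/-- `A n γ` is the first exponent sum. -/
def A (n : ℕ) (γ : Fin (2 * n + 2) → ℕ) : ℤ :=
  ∑ i ∈ Finset.univ.filter
      (fun i : Fin (2 * n + 2) => (i : ℕ) ≠ n ∧ (i : ℕ) ≠ 2 * n + 1),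
    (γ i : ℤ) * ((γ i : ℤ) - 1)

/-- The right-hand side of statement 5. -/
def F (n j : ℕ) (b : Fin (2 * n + 2)) (μ : Fin n → ℤ) : RatFunc ℚ :=
  ∑ γ ∈ (Finset.Nat.antidiagonalTuple (2 * n + 2) j).filter
      (fun γ => ∀ k : Fin n,
        (γ (⟨k, by have := k.isLt; omega⟩ : Fin (2 * n + 2)) : ℤ) -
          (γ (⟨2 * n - k, Nat.lt_of_le_of_lt (Nat.sub_le _ _) (by omega)⟩ : Fin (2 * n + 2)) : ℤ) = μ k),
    q ^ (A n γ + ∑ i, H n b i * (γ i : ℤ)) * (qfac2 j / ∏ i, qfac2 (γ i))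

section dec

variable {n : ℕ} (γ : Fin (2 * n + 2) → ℕ) (c : Fin (2 * n + 2))

lemma Hcc (x : Fin (2 * n + 2)) :
    H n x x = if (x : ℕ) = n ∨ (x : ℕ) = 2 * n + 1 then 0 else 2 := by
  rw [H_eq]; unfold Hnat; split_ifs <;> omega

lemma qfac2_step (hc : γ c ≠ 0) :
    qfac2 (γ c) = (1 - q ^ (2 * (γ c : ℤ))) * qfac2 (γ c - 1) := by
  have h1 : γ c - 1 + 1 = γ c := by omega
  have h2 : q ^ (2 * (γ c : ℤ)) = q ^ (2 * γ c : ℕ) := by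
    rw [← zpow_natCast q (2 * γ c)]
    norm_num
  rw [← h1, qfac2_succ, h1, h2]
  ring

lemma dec_cast (hc : γ c ≠ 0) (i : Fin (2 * n + 2)) :
    ((Function.update γ c (γ c - 1)) i : ℤ) = (γ i : ℤ) - (if i = c then 1 else 0) := by
  rcases eq_or_ne i c with h | h
  · subst h
    rw [Function.update_self, if_pos rfl, Nat.cast_sub (Nat.one_le_iff_ne_zero.2 hc)]
    norm_num
  · rw [Function.update_of_ne h, if_neg h, sub_zero]

lemma dec_sum (hc : γ c ≠ 0) :
    ∑ i, Function.update γ c (γ c - 1) i = (∑ i, γ i) - 1 := by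
  rw [Finset.sum_update_of_mem (Finset.mem_univ c),
    ← Finset.add_sum_erase _ γ (Finset.mem_univ c), Finset.sdiff_singleton_eq_erase]
  omega

lemma dec_E (hc : γ c ≠ 0) (x : Fin (2 * n + 2)) :
    ∑ i, H n x i * ((Function.update γ c (γ c - 1)) i : ℤ)
      = (∑ i, H n x i * (γ i : ℤ)) - H n x c := by
  simp only [dec_cast γ c hc, mul_sub, Finset.sum_sub_distrib, mul_ite, mul_one, mul_zero]
  rw [Finset.sum_ite_eq' Finset.univ c, if_pos (Finset.mem_univ c)]

lemma dec_A (hc : γ c ≠ 0) :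
    A n (Function.update γ c (γ c - 1)) = A n γ - H n c c * ((γ c : ℤ) - 1) := by
  classical
  set s := Finset.univ.filter
      (fun i : Fin (2 * n + 2) => (i : ℕ) ≠ n ∧ (i : ℕ) ≠ 2 * n + 1) with hs
  by_cases hcs : c ∈ s
  · have h2 : H n c c = 2 := by
      rw [Hcc, if_neg]
      rw [hs, Finset.mem_filter] at hcs
      push_neg
      exact hcs.2
    rw [A, A, h2, ← Finset.add_sum_erase _ _ hcs, ← Finset.add_sum_erase _ _ hcs]
    have he : ∀ i ∈ s.erase c,
        ((Function.update γ c (γ c - 1)) i : ℤ) * (((Function.update γ c (γ c - 1)) i : ℤ) - 1)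
          = (γ i : ℤ) * ((γ i : ℤ) - 1) := by
      intro i hi
      rw [Function.update_of_ne (Finset.ne_of_mem_erase hi)]
    rw [Finset.sum_congr rfl he]
    have hcc : ((Function.update γ c (γ c - 1)) c : ℤ) = (γ c : ℤ) - 1 := by
      rw [dec_cast γ c hc, if_pos rfl]
    rw [hcc]
    ring
  · have h0 : H n c c = 0 := by
      rw [Hcc, if_pos]
      rw [hs, Finset.mem_filter] at hcs
      simp only [Finset.mem_univ, true_and] at hcs
      tauto
    rw [h0, zero_mul, sub_zero, A, A]
    refine Finset.sum_congr rfl fun i hi => ?_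
    have : i ≠ c := fun h => hcs (h ▸ hi)
    rw [Function.update_of_ne this]

lemma dec_prod (hc : γ c ≠ 0) :
    ∏ i, qfac2 (γ i)
      = (1 - q ^ (2 * (γ c : ℤ))) * ∏ i, qfac2 ((Function.update γ c (γ c - 1)) i) := by
  rw [← Finset.mul_prod_erase Finset.univ (fun i => qfac2 (γ i)) (Finset.mem_univ c),
    ← Finset.mul_prod_erase Finset.univ (fun i => qfac2 ((Function.update γ c (γ c - 1)) i))
      (Finset.mem_univ c)]
  have he : ∀ i ∈ Finset.univ.erase c,
      qfac2 ((Function.update γ c (γ c - 1)) i) = qfac2 (γ i) := by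
    intro i hi
    rw [Function.update_of_ne (Finset.ne_of_mem_erase hi)]
  rw [Finset.prod_congr rfl he, Function.update_self, qfac2_step γ c hc]
  ring

end dec

lemma one_sub_q_zpow_ne_zero {k : ℕ} (hk : k ≠ 0) : 1 - q ^ (2 * (k : ℤ)) ≠ 0 := by
  have h2 : q ^ (2 * (k : ℤ)) = q ^ (2 * k : ℕ) := by
    rw [← zpow_natCast q (2 * k)]
    norm_num
  rw [h2]
  exact one_sub_q_pow_ne_zero (by omega)

lemma step (n j : ℕ) (b : Fin (2 * n + 2)) (γ : Fin (2 * n + 2) → ℕ)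
    (hγ : ∑ i, γ i = j + 1) :
    q ^ (A n γ + ∑ i, H n b i * (γ i : ℤ)) * (qfac2 (j + 1) / ∏ i, qfac2 (γ i)) =
    ∑ c, q ^ (((j : ℤ) + 1) * H n b c) *
      (if γ c ≠ 0 then
        q ^ (A n (Function.update γ c (γ c - 1)) +
            ∑ i, H n c i * ((Function.update γ c (γ c - 1)) i : ℤ)) *
          (qfac2 j / ∏ i, qfac2 ((Function.update γ c (γ c - 1)) i))
       else 0) := by
  have hP : (∏ i, qfac2 (γ i)) ≠ 0 := Finset.prod_ne_zero_iff.2 fun i _ => qfac2_ne_zero _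
  have hterm : ∀ c : Fin (2 * n + 2),
      q ^ (((j : ℤ) + 1) * H n b c) *
      (if γ c ≠ 0 then
        q ^ (A n (Function.update γ c (γ c - 1)) +
            ∑ i, H n c i * ((Function.update γ c (γ c - 1)) i : ℤ)) *
          (qfac2 j / ∏ i, qfac2 ((Function.update γ c (γ c - 1)) i))
       else 0)
      = q ^ (A n γ) * (qfac2 j / ∏ i, qfac2 (γ i)) *
          ((1 - q ^ (2 * (γ c : ℤ))) *
            q ^ (((j : ℤ) + 1) * H n b c - H n c c * (γ c : ℤ) + ∑ i, H n c i * (γ i : ℤ))) := by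
    intro c
    by_cases hc : γ c = 0
    · rw [if_neg (by simpa using hc), hc]
      norm_num
    · rw [if_pos hc, dec_A γ c hc, dec_E γ c hc c, dec_prod γ c hc]
      have hX : (1 - q ^ (2 * (γ c : ℤ))) ≠ 0 := one_sub_q_zpow_ne_zero hc
      have hPd : (∏ i, qfac2 ((Function.update γ c (γ c - 1)) i)) ≠ 0 :=
        Finset.prod_ne_zero_iff.2 fun i _ => qfac2_ne_zero _
      rw [show A n γ - H n c c * ((γ c : ℤ) - 1) + ((∑ i, H n c i * (γ i : ℤ)) - H n c c)
            = (A n γ + ∑ i, H n c i * (γ i : ℤ)) - H n c c * (γ c : ℤ) by ring,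
        show ((j : ℤ) + 1) * H n b c - H n c c * (γ c : ℤ) + ∑ i, H n c i * (γ i : ℤ)
            = (((j : ℤ) + 1) * H n b c + ∑ i, H n c i * (γ i : ℤ)) - H n c c * (γ c : ℤ)
          by ring]
      simp only [zpow_add₀ q_ne_zero, zpow_sub₀ q_ne_zero]
      have hz : q ^ (H n c c * (γ c : ℤ)) ≠ 0 := zpow_ne_zero _ q_ne_zero
      field_simp
  rw [Finset.sum_congr rfl fun c _ => hterm c, ← Finset.mul_sum]
  have hJ : ((j : ℤ) + 1) = ∑ i, (γ i : ℤ) := by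
    rw [← Nat.cast_sum _ γ, hγ]
    push_cast
    ring
  rw [← core n γ b ((j : ℤ) + 1) hJ]
  have hq2 : q ^ (2 * ((j : ℤ) + 1)) = q ^ (2 * (j + 1) : ℕ) := by
    rw [← zpow_natCast q (2 * (j + 1))]
    push_cast
    ring_nf
  rw [qfac2_succ j, zpow_add₀ q_ne_zero, hq2]
  field_simp

section frec

variable {n : ℕ} (γ : Fin (2 * n + 2) → ℕ) (c : Fin (2 * n + 2))

lemma inc_cast (γ' : Fin (2 * n + 2) → ℕ) (i : Fin (2 * n + 2)) :
    ((Function.update γ' c (γ' c + 1)) i : ℤ) = (γ' i : ℤ) + (if i = c then 1 else 0) := by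
  rcases eq_or_ne i c with h | h
  · subst h
    rw [Function.update_self, if_pos rfl]
    push_cast
    ring
  · rw [Function.update_of_ne h, if_neg h, add_zero]

lemma inc_sum (γ' : Fin (2 * n + 2) → ℕ) :
    ∑ i, Function.update γ' c (γ' c + 1) i = (∑ i, γ' i) + 1 := by
  rw [Finset.sum_update_of_mem (Finset.mem_univ c),
    ← Finset.add_sum_erase _ γ' (Finset.mem_univ c), Finset.sdiff_singleton_eq_erase]
  omega

lemma fin_eq_iff (k : Fin n) :
    ((⟨(k : ℕ), by have := k.isLt; omega⟩ : Fin (2 * n + 2)) = c) ↔ ((c : ℕ) = (k : ℕ)) := by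
  rw [Fin.ext_iff]
  exact eq_comm

lemma fin_eq_iff' (k : Fin n) :
    ((⟨2 * n - (k : ℕ), Nat.lt_of_le_of_lt (Nat.sub_le _ _) (by omega)⟩ : Fin (2 * n + 2)) = c) ↔ ((c : ℕ) = 2 * n - (k : ℕ)) := by
  rw [Fin.ext_iff]
  exact eq_comm

lemma constraint_dec (hc : γ c ≠ 0) (μ : Fin n → ℤ)
    (hγ : ∀ k : Fin n, (γ (⟨(k : ℕ), by have := k.isLt; omega⟩ : Fin (2 * n + 2)) : ℤ) -
      (γ (⟨2 * n - (k : ℕ), Nat.lt_of_le_of_lt (Nat.sub_le _ _) (by omega)⟩ : Fin (2 * n + 2)) : ℤ) = μ k) (k : Fin n) :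
    ((Function.update γ c (γ c - 1)) (⟨(k : ℕ), by have := k.isLt; omega⟩ : Fin (2 * n + 2)) : ℤ) -
      ((Function.update γ c (γ c - 1)) (⟨2 * n - (k : ℕ), Nat.lt_of_le_of_lt (Nat.sub_le _ _) (by omega)⟩ : Fin (2 * n + 2)) : ℤ)
      = μ k - cont n c k := by
  rw [dec_cast γ c hc, dec_cast γ c hc, cont, if_congr (fin_eq_iff c k) rfl rfl,
    if_congr (fin_eq_iff' c k) rfl rfl]
  have hk := k.isLt
  have h := hγ k
  split_ifs <;> omega

lemma constraint_inc (γ' : Fin (2 * n + 2) → ℕ) (μ : Fin n → ℤ)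
    (hγ : ∀ k : Fin n, (γ' (⟨(k : ℕ), by have := k.isLt; omega⟩ : Fin (2 * n + 2)) : ℤ) -
      (γ' (⟨2 * n - (k : ℕ), Nat.lt_of_le_of_lt (Nat.sub_le _ _) (by omega)⟩ : Fin (2 * n + 2)) : ℤ) = μ k - cont n c k) (k : Fin n) :
    ((Function.update γ' c (γ' c + 1)) (⟨(k : ℕ), by have := k.isLt; omega⟩ : Fin (2 * n + 2)) : ℤ) -
      ((Function.update γ' c (γ' c + 1)) (⟨2 * n - (k : ℕ), Nat.lt_of_le_of_lt (Nat.sub_le _ _) (by omega)⟩ : Fin (2 * n + 2)) : ℤ)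
      = μ k := by
  have hk := k.isLt
  have h := hγ k
  rw [cont] at h
  rw [inc_cast c, inc_cast c]
  simp only [fin_eq_iff c k, fin_eq_iff' c k]
  split_ifs at h ⊢ <;> omega

end frec

lemma F_rec (n j : ℕ) (b : Fin (2 * n + 2)) (μ : Fin n → ℤ) :
    F n (j + 1) b μ
      = ∑ c, q ^ (((j : ℤ) + 1) * H n b c) * F n j c (fun k => μ k - cont n c k) := by
  rw [F]
  rw [Finset.sum_congr rfl (fun γ hγ => step n j b γ (by
    rw [Finset.mem_filter, Finset.Nat.mem_antidiagonalTuple] at hγ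
    exact hγ.1))]
  rw [Finset.sum_comm]
  refine Finset.sum_congr rfl fun c _ => ?_
  rw [F, Finset.mul_sum]
  simp only [mul_ite, mul_zero]
  rw [← Finset.sum_filter]
  refine Finset.sum_nbij' (fun γ => Function.update γ c (γ c - 1))
    (fun γ' => Function.update γ' c (γ' c + 1)) ?_ ?_ ?_ ?_ ?_
  · intro γ hγ
    simp only [Finset.mem_filter, Finset.Nat.mem_antidiagonalTuple] at hγ ⊢
    obtain ⟨⟨h1, h2⟩, h3⟩ := hγ
    refine ⟨by rw [dec_sum γ c h3, h1]; omega, fun k => constraint_dec γ c h3 μ h2 k⟩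
  · intro γ' hγ'
    simp only [Finset.mem_filter, Finset.Nat.mem_antidiagonalTuple] at hγ' ⊢
    obtain ⟨h1, h2⟩ := hγ'
    refine ⟨⟨by rw [inc_sum c γ', h1], fun k => constraint_inc c γ' μ h2 k⟩, ?_⟩
    rw [Function.update_self]
    omega
  · intro γ hγ
    simp only [Finset.mem_filter] at hγ
    show Function.update (Function.update γ c (γ c - 1)) c
        ((Function.update γ c (γ c - 1)) c + 1) = γ
    rw [Function.update_self, Function.update_idem, show γ c - 1 + 1 = γ c by omega,
      Function.update_eq_self]
  · intro γ' _
    show Function.update (Function.update γ' c (γ' c + 1)) c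
        ((Function.update γ' c (γ' c + 1)) c - 1) = γ'
    rw [Function.update_self, Function.update_idem, Nat.add_sub_cancel,
      Function.update_eq_self]
  · intro γ _
    rfl


lemma g_rec (n j : ℕ) (b : Fin (2 * n + 2)) (μ : Fin n → ℤ) :
    g n (j + 1) b μ
      = ∑ c, q ^ (((j : ℤ) + 1) * H n b c) * g n j c (fun k => μ k - cont n c k) := by
  have hsplit : ∀ (w : Fin (j + 1) → Fin (2 * n + 2)) (k : Fin n),
      ∑ i : Fin (j + 1), cont n (w i) k
        = (∑ i : Fin j, cont n (w i.castSucc) k) + cont n (w (Fin.last j)) k := fun w k =>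
    Fin.sum_univ_castSucc (fun i => cont n (w i) k)
  have hRHS : ∑ c, q ^ (((j : ℤ) + 1) * H n b c) * g n j c (fun k => μ k - cont n c k)
      = ∑ w : Fin (j + 1) → Fin (2 * n + 2),
          (if (∀ k, ∑ i : Fin (j + 1), cont n (w i) k = μ k) then
            q ^ (((j : ℤ) + 1) * H n b (w (Fin.last j)) +
              ∑ i : Fin j, ((i : ℤ) + 1) * H n (w i.succ) (w i.castSucc)) else 0) := by
    have hg : ∀ c : Fin (2 * n + 2),
        q ^ (((j : ℤ) + 1) * H n b c) * g n j c (fun k => μ k - cont n c k)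
          = ∑ w : Fin (j + 1) → Fin (2 * n + 2),
              (if (w (Fin.last j) = c ∧
                    ∀ k, (∑ i : Fin j, cont n (w i.castSucc) k) = μ k - cont n c k) then
                q ^ (((j : ℤ) + 1) * H n b c) *
                  q ^ (∑ i : Fin j, ((i : ℤ) + 1) * H n (w i.succ) (w i.castSucc)) else 0) := by
      intro c
      rw [g, Finset.sum_filter, Finset.mul_sum]
      exact Finset.sum_congr rfl fun w _ => by rw [mul_ite, mul_zero]
    rw [Finset.sum_congr rfl fun c _ => hg c, Finset.sum_comm]
    refine Finset.sum_congr rfl fun w _ => ?_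
    simp only [ite_and]
    rw [Finset.sum_ite_eq Finset.univ (w (Fin.last j)), if_pos (Finset.mem_univ _)]
    refine if_congr ?_ ?_ rfl
    · constructor
      · intro h k
        rw [hsplit w k, h k]
        ring
      · intro h k
        have h2 := h k
        rw [hsplit w k] at h2
        linarith
    · rw [← zpow_add₀ q_ne_zero]
  rw [hRHS, g, Finset.sum_filter,
    ← Equiv.sum_comp (Fin.snocEquiv (fun _ : Fin (j + 2) => Fin (2 * n + 2))),
    Fintype.sum_prod_type, Finset.sum_comm]
  refine Finset.sum_congr rfl fun w _ => ?_
  simp only [Fin.snocEquiv_apply, Fin.snoc_last, Fin.snoc_castSucc, ite_and]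
  rw [Finset.sum_ite_eq' Finset.univ b, if_pos (Finset.mem_univ _)]
  refine if_congr Iff.rfl ?_ rfl
  congr 1
  have hE := Fin.sum_univ_castSucc
    (fun i : Fin (j + 1) => ((i : ℤ) + 1) *
      H n (Fin.snoc (α := fun _ : Fin (j + 2) => Fin (2 * n + 2)) w b i.succ) (w i))
  rw [hE]
  simp only [Fin.succ_castSucc, Fin.snoc_castSucc, Fin.succ_last, Fin.snoc_last,
    Fin.coe_castSucc, Fin.val_last]
  ring

lemma g_zero (n : ℕ) (b : Fin (2 * n + 2)) (μ : Fin n → ℤ) :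
    g n 0 b μ = if (∀ k : Fin n, μ k = 0) then 1 else 0 := by
  rw [g, Finset.sum_filter]
  rw [Finset.sum_eq_single (fun _ => b : Fin 1 → Fin (2 * n + 2))]
  · simp [eq_comm]
  · intro p _ hp
    rw [if_neg]
    intro hcond
    exact hp (funext fun i => by rw [Subsingleton.elim i (Fin.last 0), hcond.1])
  · intro h
    exact absurd (Finset.mem_univ _) h

lemma F_zero (n : ℕ) (b : Fin (2 * n + 2)) (μ : Fin n → ℤ) :
    F n 0 b μ = if (∀ k : Fin n, μ k = 0) then 1 else 0 := by
  rw [F, Finset.sum_filter, Finset.Nat.antidiagonalTuple_zero_right, Finset.sum_singleton]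
  refine if_congr ?_ ?_ rfl
  · simp [eq_comm]
  · simp [A, qfac2]

lemma g_eq_F (n : ℕ) : ∀ (j : ℕ) (b : Fin (2 * n + 2)) (μ : Fin n → ℤ),
    g n j b μ = F n j b μ := by
  intro j
  induction j with
  | zero =>
    intro b μ
    rw [g_zero, F_zero]
  | succ j ih =>
    intro b μ
    rw [g_rec, F_rec]
    exact Finset.sum_congr rfl fun c _ => by rw [ih]


/-- the `q`-multinomial formula for the unrestricted one-dimensional sum of
the level-1 perfect crystal of type `D_{n+1}^{(2)}`.  The first sum in the exponent runs
over `i ∈ B` with `i ≠ 0, φ` (i.e. over positions `≠ n, 2n+1`), and the Gaussian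
multinomial `[j;γ]_{q²}` is taken in the variable `q²`. -/
theorem statement5 (n : ℕ) (hn : 2 ≤ n) (j : ℕ) (b : Fin (2 * n + 2)) (μ : Fin n → ℤ) :
    g n j b μ =
      ∑ γ ∈ (Finset.Nat.antidiagonalTuple (2 * n + 2) j).filter
          (fun γ => ∀ k : Fin n,
            (γ (⟨k, by have := k.isLt; omega⟩ : Fin (2 * n + 2)) : ℤ) -
              (γ (⟨2 * n - k, by omega⟩ : Fin (2 * n + 2)) : ℤ) = μ k),
        q ^ ((∑ i ∈ Finset.univ.filter
                (fun i : Fin (2 * n + 2) => (i : ℕ) ≠ n ∧ (i : ℕ) ≠ 2 * n + 1),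
                (γ i : ℤ) * ((γ i : ℤ) - 1)) +
              ∑ i, H n b i * (γ i : ℤ)) *
          (qfac2 j / ∏ i, qfac2 (γ i)) :=
  g_eq_F n j b μ

end
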